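/- For all real numbers y, z with 0 < y ≤ z, we have (y/2)·log₂(y) + (z/2)·log₂(z) + y ≤ ((y+z)/2)·log₂(y+z). -/

import Mathlib

lemma log_one_add_ge (t : ℝ) (h0 : 0 ≤ t) (h1 : t ≤ 1) :
    t * Real.log 2 ≤ Real.log (1 + t) := by
  have hc := StrictConcaveOn.concaveOn strictConcaveOn_log_Ioi
  have := hc.2 (show (1:ℝ) ∈ Set.Ioi (0:ℝ) by norm_num)
    (show (2:ℝ) ∈ Set.Ioi (0:ℝ) by norm_num)
    (show (0:ℝ) ≤ 1 - t by linarith) h0 (by ring)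
  simp only [Real.log_one, smul_eq_mul] at this
  calc t * Real.log 2 ≤ Real.log ((1-t) * 1 + t * 2) := by linarith
    _ = Real.log (1 + t) := by ring_nf

lemma one_var (u : ℝ) (hu : 1 ≤ u) :
    u * Real.log u + 2 * Real.log 2 ≤ (1 + u) * Real.log (1 + u) := by
  have hu0 : 0 < u := by linarith
  have key : Real.log (1 + u) = Real.log u + Real.log (1 + 1 / u) := by
    rw [← Real.log_mul (by positivity) (by positivity)]
    congr 1
    field_simp
    ring
  have h1 : Real.log 2 ≤ Real.log (1 + u) := by
    apply Real.log_le_log (by norm_num) (by linarith)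
  have h2 : (1 / u) * Real.log 2 ≤ Real.log (1 + 1 / u) :=
    log_one_add_ge _ (by positivity) (by rw [div_le_one hu0]; linarith)
  have h3 : Real.log 2 ≤ u * Real.log (1 + 1 / u) := by
    have := mul_le_mul_of_nonneg_left h2 hu0.le
    calc Real.log 2 = u * ((1/u) * Real.log 2) := by field_simp
      _ ≤ u * Real.log (1 + 1 / u) := this
  calc u * Real.log u + 2 * Real.log 2
      ≤ u * Real.log u + Real.log (1 + u) + u * Real.log (1 + 1/u) := by linarith
    _ = (1 + u) * Real.log (1 + u) := by rw [key]; ring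

/-- The key analytic inequality: for `0 < y ≤ z`,
`(y/2)·log₂ y + (z/2)·log₂ z + y ≤ ((y+z)/2)·log₂ (y+z)`. -/
theorem key_log_inequality (y z : ℝ) (hy : 0 < y) (hyz : y ≤ z) :
    y / 2 * Real.logb 2 y + z / 2 * Real.logb 2 z + y ≤
      (y + z) / 2 * Real.logb 2 (y + z) := by
  have hz : 0 < z := lt_of_lt_of_le hy hyz
  have hl2 : (0:ℝ) < Real.log 2 := Real.log_pos (by norm_num)
  -- reduce to natural log inequality
  have main : y * Real.log y + z * Real.log z + 2 * y * Real.log 2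
      ≤ (y + z) * Real.log (y + z) := by
    set u := z / y with hu
    have hu1 : 1 ≤ u := (one_le_div hy).2 hyz
    have hzy : z = u * y := by rw [hu, div_mul_cancel₀ z hy.ne']
    have hlz : Real.log z = Real.log u + Real.log y := by
      rw [hzy, Real.log_mul (by positivity) hy.ne']
    have hls : Real.log (y + z) = Real.log (1 + u) + Real.log y := by
      rw [show y + z = (1 + u) * y by rw [hzy]; ring,
        Real.log_mul (by positivity) hy.ne']
    have h := one_var u hu1
    have h' := mul_le_mul_of_nonneg_left h hy.le
    rw [hlz, hls, hzy]
    nlinarith [h']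
  simp only [Real.logb]
  rw [← sub_nonneg]
  have eq : (y + z) / 2 * (Real.log (y + z) / Real.log 2)
      - (y / 2 * (Real.log y / Real.log 2) + z / 2 * (Real.log z / Real.log 2) + y)
      = ((y + z) * Real.log (y + z) - (y * Real.log y + z * Real.log z + 2 * y * Real.log 2))
        / (2 * Real.log 2) := by
    field_simp
  rw [eq]
  exact div_nonneg (by linarith) (by positivity)
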